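/- For any ρ ∈ ℂⁿ with Re ρ ≠ 0, the multiplier m_ρ(ξ) = -|ξ|² + 2iρ·ξ satisfies: ξ ↦ 1/m_ρ(ξ) is integrable on every compact subset of ℝⁿ (n ≥ 3). -/

import Mathlib

open scoped BigOperators
open MeasureTheory
open Set
open scoped ENNReal


lemma aux_pow_gap {k : ℕ} (hk : 2 ≤ k) {r₁ r₂ : ℝ} (h0 : 0 ≤ r₁) (h12 : r₁ ≤ r₂) :
    r₂ ^ k - r₁ ^ k ≤ k * r₂ ^ (k - 2) * (r₂ ^ 2 - r₁ ^ 2) := by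
  have h2 : (0:ℝ) ≤ r₂ := h0.trans h12
  have key : r₂ ^ k - r₁ ^ k ≤ k * r₂ ^ (k-1) * (r₂ - r₁) := by
    rw [← geom_sum₂_mul]
    have : ∑ i ∈ Finset.range k, r₂ ^ i * r₁ ^ (k - 1 - i) ≤ k * r₂ ^ (k-1) := by
      calc ∑ i ∈ Finset.range k, r₂ ^ i * r₁ ^ (k - 1 - i)
          ≤ ∑ i ∈ Finset.range k, r₂ ^ (k-1) := by
            apply Finset.sum_le_sum
            intro i hi
            have hi' := Finset.mem_range.mp hi
            calc r₂ ^ i * r₁ ^ (k - 1 - i) ≤ r₂ ^ i * r₂ ^ (k - 1 - i) := by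
                  exact mul_le_mul_of_nonneg_left (pow_le_pow_left₀ h0 h12 _) (pow_nonneg h2 _)
              _ = r₂ ^ (i + (k - 1 - i)) := (pow_add _ _ _).symm
              _ = r₂ ^ (k - 1) := by congr 1; omega
        _ = k * r₂ ^ (k-1) := by rw [Finset.sum_const, Finset.card_range, nsmul_eq_mul]
    exact mul_le_mul_of_nonneg_right this (by linarith)
  calc r₂ ^ k - r₁ ^ k ≤ k * r₂ ^ (k-1) * (r₂ - r₁) := key
    _ ≤ k * r₂ ^ (k-2) * (r₂ ^ 2 - r₁ ^ 2) := by
        have h1 : r₂ ^ (k-1) = r₂ ^ (k-2) * r₂ := by rw [← pow_succ]; congr 1; omega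
        have : r₂ * (r₂ - r₁) ≤ (r₂ + r₁) * (r₂ - r₁) := by nlinarith
        calc k * r₂ ^ (k-1) * (r₂ - r₁) = k * r₂ ^ (k-2) * (r₂ * (r₂ - r₁)) := by ring_nf; rw [h1]; ring
          _ ≤ k * r₂ ^ (k-2) * ((r₂ + r₁) * (r₂ - r₁)) := by
              apply mul_le_mul_of_nonneg_left this
              positivity
          _ = k * r₂ ^ (k-2) * (r₂ ^ 2 - r₁ ^ 2) := by ring

noncomputable def ballC (k : ℕ) : ℝ := Real.sqrt Real.pi ^ k / Real.Gamma (k / 2 + 1)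

lemma ballC_nonneg (k : ℕ) : 0 ≤ ballC k := by
  unfold ballC
  have : 0 < Real.Gamma ((k:ℝ) / 2 + 1) := Real.Gamma_pos_of_pos (by positivity)
  positivity

lemma euclid_vol_ball {k : ℕ} (hk : 2 ≤ k) (c : EuclideanSpace ℝ (Fin k)) (r : ℝ) :
    volume (Metric.ball c r) = ENNReal.ofReal r ^ k * ENNReal.ofReal (ballC k) := by
  haveI : Nonempty (Fin k) := ⟨⟨0, by omega⟩⟩
  rw [EuclideanSpace.volume_ball]
  simp [ballC, Fintype.card_fin]

lemma aux_annulus_vol {k : ℕ} (hk : 2 ≤ k) (c : EuclideanSpace ℝ (Fin k)) (α β B : ℝ)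
    (hβB : β ≤ B) :
    volume {y : EuclideanSpace ℝ (Fin k) | α < ‖y - c‖ ^ 2 ∧ ‖y - c‖ ^ 2 < β} ≤
      ENNReal.ofReal ((k : ℝ) * Real.sqrt B ^ (k - 2) * ballC k * (β - α)) := by
  haveI : Nonempty (Fin k) := ⟨⟨0, by omega⟩⟩
  by_cases hcase : 0 < β ∧ α < β
  swap
  · have hempty : {y : EuclideanSpace ℝ (Fin k) | α < ‖y - c‖ ^ 2 ∧ ‖y - c‖ ^ 2 < β} = ∅ := by
      ext y; simp only [mem_setOf_eq, mem_empty_iff_false, iff_false, not_and, not_lt]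
      intro h1
      by_contra h2
      push_neg at h2
      exact hcase ⟨lt_of_le_of_lt (sq_nonneg _) h2, h1.trans h2⟩
    rw [hempty, measure_empty]
    positivity
  obtain ⟨hβ, hαβ⟩ := hcase
  set α' : ℝ := max α 0 with hα'
  have hα'0 : 0 ≤ α' := le_max_right _ _
  have hsub : {y : EuclideanSpace ℝ (Fin k) | α < ‖y - c‖ ^ 2 ∧ ‖y - c‖ ^ 2 < β} ⊆
      Metric.ball c (Real.sqrt β) \ Metric.ball c (Real.sqrt α') := by
    intro y hy
    obtain ⟨h1, h2⟩ := hy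
    constructor
    · rw [Metric.mem_ball, dist_eq_norm]
      exact (Real.lt_sqrt (norm_nonneg _)).mpr h2
    · rw [Metric.mem_ball, dist_eq_norm, not_lt]
      have : α' ≤ ‖y - c‖ ^ 2 := by
        rcases le_or_gt α 0 with h | h
        · simp only [hα', max_eq_right h]; positivity
        · simp only [hα', max_eq_left h.le]; exact h1.le
      calc Real.sqrt α' ≤ Real.sqrt (‖y - c‖ ^ 2) := Real.sqrt_le_sqrt this
        _ = ‖y - c‖ := Real.sqrt_sq (norm_nonneg _)
  refine (measure_mono hsub).trans ?_
  have hballsub : Metric.ball c (Real.sqrt α') ⊆ Metric.ball c (Real.sqrt β) :=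
    Metric.ball_subset_ball (Real.sqrt_le_sqrt (by simp only [hα', max_le_iff]; constructor <;> linarith))
  rw [measure_diff hballsub measurableSet_ball.nullMeasurableSet measure_ball_lt_top.ne]
  rw [euclid_vol_ball hk, euclid_vol_ball hk]
  have hsβ : 0 ≤ Real.sqrt β := Real.sqrt_nonneg _
  have hsα : 0 ≤ Real.sqrt α' := Real.sqrt_nonneg _
  rw [← ENNReal.ofReal_pow hsβ, ← ENNReal.ofReal_pow hsα,
      ← ENNReal.ofReal_mul (by positivity), ← ENNReal.ofReal_mul (by positivity),
      ← ENNReal.ofReal_sub _ (mul_nonneg (pow_nonneg hsα _) (ballC_nonneg k))]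

  apply ENNReal.ofReal_le_ofReal
  have hgap := aux_pow_gap hk hsα (Real.sqrt_le_sqrt (by simp only [hα', max_le_iff]; constructor <;> linarith) : Real.sqrt α' ≤ Real.sqrt β)
  have hsq1 : Real.sqrt β ^ 2 = β := Real.sq_sqrt hβ.le
  have hsq2 : Real.sqrt α' ^ 2 = α' := Real.sq_sqrt hα'0
  rw [hsq1, hsq2] at hgap
  have hmono : Real.sqrt β ^ (k-2) ≤ Real.sqrt B ^ (k-2) :=
    pow_le_pow_left₀ hsβ (Real.sqrt_le_sqrt hβB) _
  have hβα : β - α' ≤ β - α := by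
    have : α ≤ α' := le_max_left _ _
    linarith
  have hC := ballC_nonneg k
  calc Real.sqrt β ^ k * ballC k - Real.sqrt α' ^ k * ballC k
      = (Real.sqrt β ^ k - Real.sqrt α' ^ k) * ballC k := by ring
    _ ≤ (k * Real.sqrt β ^ (k-2) * (β - α')) * ballC k := by
        apply mul_le_mul_of_nonneg_right _ hC
        exact hgap
    _ ≤ (k * Real.sqrt B ^ (k-2) * (β - α)) * ballC k := by
        apply mul_le_mul_of_nonneg_right _ hC
        have h1 : 0 ≤ β - α' := by
          have : α' ≤ β := by simp only [hα', max_le_iff]; constructor <;> linarith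
          linarith
        apply mul_le_mul (by apply mul_le_mul_of_nonneg_left hmono (by positivity)) hβα h1
        positivity
    _ = (k : ℝ) * Real.sqrt B ^ (k - 2) * ballC k * (β - α) := by ring
lemma aux_annulus_pi {k : ℕ} (hk : 2 ≤ k) (d : Fin k → ℝ) (α β B : ℝ) (hβB : β ≤ B) :
    (volume : Measure (Fin k → ℝ))
      {y | α < ∑ i, (y i + d i) ^ 2 ∧ ∑ i, (y i + d i) ^ 2 < β} ≤
      ENNReal.ofReal ((k : ℝ) * Real.sqrt B ^ (k - 2) * ballC k * (β - α)) := by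
  have hQ : Measurable fun y : Fin k → ℝ => ∑ i, (y i + d i) ^ 2 :=
    Finset.measurable_sum _ fun i _ => ((measurable_pi_apply i).add_const _).pow_const 2
  have hTm : MeasurableSet {y : Fin k → ℝ | α < ∑ i, (y i + d i) ^ 2 ∧ ∑ i, (y i + d i) ^ 2 < β} :=
    (measurableSet_lt measurable_const hQ).inter (measurableSet_lt hQ measurable_const)
  have hmp := EuclideanSpace.volume_preserving_symm_measurableEquiv_toLp (Fin k)
  rw [← hmp.measure_preimage hTm.nullMeasurableSet]
  set c : EuclideanSpace ℝ (Fin k) := WithLp.toLp 2 (fun i => -d i : Fin k → ℝ) with hc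
  have hnorm : ∀ y : EuclideanSpace ℝ (Fin k), ‖y - c‖ ^ 2 = ∑ i, (y i + d i) ^ 2 := by
    intro y
    rw [EuclideanSpace.norm_eq, Real.sq_sqrt (by positivity)]
    congr 1
    ext i
    have : (y - c) i = y i + d i := by
      simp [hc, sub_eq_add_neg]
    rw [this, Real.norm_eq_abs, sq_abs]
  have hpre : (MeasurableEquiv.toLp 2 (Fin k → ℝ)).symm ⁻¹'
      {y : Fin k → ℝ | α < ∑ i, (y i + d i) ^ 2 ∧ ∑ i, (y i + d i) ^ 2 < β} =
      {y : EuclideanSpace ℝ (Fin k) | α < ‖y - c‖ ^ 2 ∧ ‖y - c‖ ^ 2 < β} := by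
    ext y
    simp only [Set.mem_preimage, Set.mem_setOf_eq, hnorm y]
    rfl
  rw [hpre]
  exact aux_annulus_vol hk c α β B hβB
lemma aux_prod_bound {k : ℕ} (hk : 2 ≤ k) {A : ℝ} (hA : 0 < A) (c0 : ℝ) (d : Fin k → ℝ)
    (r2 : ℝ) {lam : ℝ} (hl : 0 < lam) (hl1 : lam ≤ 1) :
    (volume.prod volume : Measure (ℝ × (Fin k → ℝ)))
      {p | |2 * A * p.1| < lam ∧ |((p.1 + c0) ^ 2 + ∑ i, (p.2 i + d i) ^ 2) - r2| < lam} ≤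
      ENNReal.ofReal (lam / A) *
        ENNReal.ofReal ((k : ℝ) * Real.sqrt (r2 + 1) ^ (k - 2) * ballC k * (2 * lam)) := by
  set V : ℝ≥0∞ := ENNReal.ofReal ((k : ℝ) * Real.sqrt (r2 + 1) ^ (k - 2) * ballC k * (2 * lam))
    with hV
  have hf : Measurable fun p : ℝ × (Fin k → ℝ) => (p.1 + c0) ^ 2 + ∑ i, (p.2 i + d i) ^ 2 := by
    apply Measurable.add
    · exact (measurable_fst.add_const _).pow_const 2
    · exact Finset.measurable_sum _ fun i _ =>
        (((measurable_pi_apply i).comp measurable_snd).add_const _).pow_const 2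
  have hS : MeasurableSet {p : ℝ × (Fin k → ℝ) |
      |2 * A * p.1| < lam ∧ |((p.1 + c0) ^ 2 + ∑ i, (p.2 i + d i) ^ 2) - r2| < lam} :=
    (measurableSet_lt (measurable_fst.const_mul (2 * A)).abs measurable_const).inter
      (measurableSet_lt (hf.sub_const r2).abs measurable_const)
  rw [Measure.prod_apply hS]
  have hbd : ∀ t : ℝ,
      (volume : Measure (Fin k → ℝ)) (Prod.mk t ⁻¹' {p : ℝ × (Fin k → ℝ) |
        |2 * A * p.1| < lam ∧ |((p.1 + c0) ^ 2 + ∑ i, (p.2 i + d i) ^ 2) - r2| < lam}) ≤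
      Set.indicator {t : ℝ | |2 * A * t| < lam} (fun _ => V) t := by
    intro t
    by_cases ht : |2 * A * t| < lam
    · rw [Set.indicator_of_mem (show t ∈ {t : ℝ | |2 * A * t| < lam} from ht) (fun _ => V)]
      have hsub : Prod.mk t ⁻¹' {p : ℝ × (Fin k → ℝ) |
          |2 * A * p.1| < lam ∧ |((p.1 + c0) ^ 2 + ∑ i, (p.2 i + d i) ^ 2) - r2| < lam} ⊆
          {y : Fin k → ℝ | (r2 - (t + c0) ^ 2 - lam) < ∑ i, (y i + d i) ^ 2 ∧
            ∑ i, (y i + d i) ^ 2 < (r2 - (t + c0) ^ 2 - lam) + 2 * lam} := by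
        intro y hy
        obtain ⟨-, h2⟩ := hy
        rw [abs_lt] at h2
        constructor <;> [linarith [h2.1]; linarith [h2.2]]
      refine (measure_mono hsub).trans ?_
      have := aux_annulus_pi hk d (r2 - (t + c0) ^ 2 - lam) ((r2 - (t + c0) ^ 2 - lam) + 2 * lam)
        (r2 + 1) (by nlinarith [sq_nonneg (t + c0)])
      convert this using 2
      · rfl
      ring
    · rw [Set.indicator_of_notMem (show t ∉ {t : ℝ | |2 * A * t| < lam} from ht) (fun _ => V)]
      have : Prod.mk t ⁻¹' {p : ℝ × (Fin k → ℝ) |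
          |2 * A * p.1| < lam ∧ |((p.1 + c0) ^ 2 + ∑ i, (p.2 i + d i) ^ 2) - r2| < lam} = ∅ := by
        ext y; simp only [Set.mem_preimage, Set.mem_setOf_eq, Set.mem_empty_iff_false, iff_false]
        intro h; exact ht h.1
      rw [this, measure_empty]
  refine (lintegral_mono hbd).trans ?_
  have hmeas : MeasurableSet {t : ℝ | |2 * A * t| < lam} := by
    have : Measurable fun t : ℝ => |2 * A * t| := by fun_prop
    exact measurableSet_lt this measurable_const
  rw [lintegral_indicator (s := {t : ℝ | |2 * A * t| < lam}) hmeas, setLIntegral_const]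
  have hset : {t : ℝ | |2 * A * t| < lam} = Metric.ball (0:ℝ) (lam / (2 * A)) := by
    ext t
    rw [Metric.mem_ball, Real.dist_eq, sub_zero, Set.mem_setOf_eq, abs_mul, abs_of_pos (by linarith : (0:ℝ) < 2 * A)]
    rw [lt_div_iff₀ (by linarith : (0:ℝ) < 2 * A)]
    constructor <;> intro h <;> linarith
  rw [hset, Real.volume_ball]
  have h2A : (2 : ℝ) * (lam / (2 * A)) = lam / A := by
    field_simp
  rw [h2A, mul_comm]
lemma aux_main_bound {k : ℕ} (hk : 2 ≤ k) (a b : EuclideanSpace ℝ (Fin (k + 1))) (ha : a ≠ 0)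
    {lam : ℝ} (hl : 0 < lam) (hl1 : lam ≤ 1) :
    volume {ξ : EuclideanSpace ℝ (Fin (k + 1)) |
        |2 * inner ℝ a ξ| < lam ∧ |‖ξ + b‖ ^ 2 - ‖b‖ ^ 2| < lam} ≤
      ENNReal.ofReal (lam / ‖a‖) *
        ENNReal.ofReal ((k : ℝ) * Real.sqrt (‖b‖ ^ 2 + 1) ^ (k - 2) * ballC k * (2 * lam)) := by
  have hna : (0:ℝ) < ‖a‖ := norm_pos_iff.mpr ha
  -- orthonormal basis with B 0 = e
  set e : EuclideanSpace ℝ (Fin (k + 1)) := ‖a‖⁻¹ • a with he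
  have hae : a = ‖a‖ • e := by
    rw [he, smul_smul, mul_inv_cancel₀ hna.ne', one_smul]
  have hne : ‖e‖ = 1 := by
    rw [he, norm_smul, norm_inv, norm_norm, inv_mul_cancel₀ hna.ne']
  haveI : Subsingleton (({0} : Set (Fin (k + 1)))) := by
    rw [Set.subsingleton_coe]; exact Set.subsingleton_singleton
  have horth : Orthonormal ℝ (({0} : Set (Fin (k + 1))).restrict
      (fun _ : Fin (k + 1) => e)) := by
    constructor
    · intro i; exact hne
    · intro i j hij; exact absurd (Subsingleton.elim i j) hij
  obtain ⟨B, hB⟩ := horth.exists_orthonormalBasis_extension_of_card_eq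
    (by simp [finrank_euclideanSpace])
  have hB0 : B 0 = e := hB 0 rfl
  set c : EuclideanSpace ℝ (Fin (k + 1)) := B.repr b with hc
  set r2 : ℝ := ‖b‖ ^ 2 with hr2
  -- step 1: transfer via B.repr
  have hinner : ∀ ξ : EuclideanSpace ℝ (Fin (k + 1)),
      (inner ℝ a ξ : ℝ) = ‖a‖ * (B.repr ξ) 0 := by
    intro ξ
    have hra : B.repr a = ‖a‖ • EuclideanSpace.single 0 (1:ℝ) := by
      conv_lhs => rw [hae]
      rw [B.repr.map_smul]
      rw [show B.repr e = EuclideanSpace.single 0 1 from by rw [← hB0, B.repr_self]]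
    calc (inner ℝ a ξ : ℝ) = inner ℝ (B.repr a) (B.repr ξ) := (B.repr.inner_map_map a ξ).symm
      _ = ‖a‖ * (B.repr ξ) 0 := by
          rw [hra, real_inner_smul_left, EuclideanSpace.inner_single_left]
          simp
  have hnormadd : ∀ ξ : EuclideanSpace ℝ (Fin (k + 1)),
      ‖ξ + b‖ = ‖B.repr ξ + c‖ := by
    intro ξ
    rw [hc, ← map_add, B.repr.norm_map]
  set S' : Set (EuclideanSpace ℝ (Fin (k + 1))) :=
    {x | |2 * (‖a‖ * x 0)| < lam ∧ |‖x + c‖ ^ 2 - r2| < lam} with hS'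
  have hS'open : MeasurableSet S' := by
    apply IsOpen.measurableSet
    have h1 : Continuous fun x : EuclideanSpace ℝ (Fin (k + 1)) => |2 * (‖a‖ * x 0)| := by
      have : Continuous fun x : EuclideanSpace ℝ (Fin (k + 1)) => x 0 :=
        (EuclideanSpace.proj (0 : Fin (k+1)) : EuclideanSpace ℝ (Fin (k+1)) →L[ℝ] ℝ).continuous
      fun_prop
    have h2 : Continuous fun x : EuclideanSpace ℝ (Fin (k + 1)) => |‖x + c‖ ^ 2 - r2| := by
      fun_prop
    exact (isOpen_lt h1 continuous_const).inter (isOpen_lt h2 continuous_const)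
  have hpre1 : {ξ : EuclideanSpace ℝ (Fin (k + 1)) |
      |2 * inner ℝ a ξ| < lam ∧ |‖ξ + b‖ ^ 2 - ‖b‖ ^ 2| < lam} = B.repr ⁻¹' S' := by
    ext ξ
    simp only [Set.mem_preimage, Set.mem_setOf_eq, hS', hinner ξ, hnormadd ξ, hr2]
  rw [hpre1, B.measurePreserving_repr.measure_preimage hS'open.nullMeasurableSet]
  -- step 2: to pi space
  have hmpe := EuclideanSpace.volume_preserving_symm_measurableEquiv_toLp (Fin (k + 1))
  set S'' : Set (Fin (k + 1) → ℝ) :=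
    {x | |2 * (‖a‖ * x 0)| < lam ∧ |(∑ i, (x i + c i) ^ 2) - r2| < lam} with hS''
  have hQm : Measurable fun x : Fin (k+1) → ℝ => ∑ i, (x i + c i) ^ 2 :=
    Finset.measurable_sum _ fun i _ => ((measurable_pi_apply i).add_const _).pow_const 2
  have hm1 : Measurable fun x : Fin (k + 1) → ℝ => 2 * (‖a‖ * x 0) :=
    by fun_prop
  have hS''m : MeasurableSet S'' :=
    (measurableSet_lt hm1.abs measurable_const).inter
      (measurableSet_lt (hQm.sub_const r2).abs measurable_const)
  have hnorm2 : ∀ x : EuclideanSpace ℝ (Fin (k + 1)), ‖x + c‖ ^ 2 = ∑ i, (x i + c i) ^ 2 := by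
    intro x
    rw [EuclideanSpace.norm_eq, Real.sq_sqrt (by positivity)]
    congr 1; ext i
    rw [show (x + c) i = x i + c i from rfl, Real.norm_eq_abs, sq_abs]
  have hpre2 : S' = (MeasurableEquiv.toLp 2 (Fin (k + 1) → ℝ)).symm ⁻¹' S'' := by
    ext x
    simp only [Set.mem_preimage, Set.mem_setOf_eq, hS', hS'', hnorm2 x]
    rfl
  rw [hpre2, hmpe.measure_preimage hS''m.nullMeasurableSet]
  -- step 3: split first coordinate
  have hmps := (MeasureTheory.volume_preserving_piFinSuccAbove (fun _ : Fin (k + 1) => ℝ) 0).symm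
  rw [← hmps.measure_preimage hS''m.nullMeasurableSet]
  have hpre3 : (MeasurableEquiv.piFinSuccAbove (fun _ : Fin (k + 1) => ℝ) 0).symm ⁻¹' S'' =
      {p : ℝ × (Fin k → ℝ) | |2 * ‖a‖ * p.1| < lam ∧
        |((p.1 + c 0) ^ 2 + ∑ i, (p.2 i + c (Fin.succ i)) ^ 2) - r2| < lam} := by
    ext p
    have happ0 : (MeasurableEquiv.piFinSuccAbove (fun _ : Fin (k + 1) => ℝ) 0).symm p 0 = p.1 := by
      simp [MeasurableEquiv.piFinSuccAbove]
    have happs : ∀ i : Fin k,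
        (MeasurableEquiv.piFinSuccAbove (fun _ : Fin (k + 1) => ℝ) 0).symm p (Fin.succ i) = p.2 i := by
      intro i
      simp [MeasurableEquiv.piFinSuccAbove, Fin.zero_succAbove]
    simp only [Set.mem_preimage, Set.mem_setOf_eq, hS'']
    rw [Fin.sum_univ_succ, happ0]
    have : ∀ i : Fin k, ((MeasurableEquiv.piFinSuccAbove (fun _ : Fin (k + 1) => ℝ) 0).symm p
        (Fin.succ i) + c (Fin.succ i)) ^ 2 = (p.2 i + c (Fin.succ i)) ^ 2 := by
      intro i; rw [happs i]
    rw [Finset.sum_congr rfl (fun i _ => this i)]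
    rw [mul_assoc]
  rw [hpre3]
  have := aux_prod_bound hk hna (c 0) (fun i => c (Fin.succ i)) r2 hl hl1
  exact this

/-- For `n ≥ 3` and `ρ ∈ ℂⁿ` with `Re ρ ≠ 0`, the reciprocal of the Fourier
multiplier `m_ρ(ξ) = -|ξ|² + 2iρ·ξ` is integrable on every compact subset of `ℝⁿ`. -/
theorem statement3 (n : ℕ) (hn : 3 ≤ n) (ρ : EuclideanSpace ℂ (Fin n))
    (hRe : ¬ (∀ j, (ρ j).re = 0)) :
    ∀ K : Set (EuclideanSpace ℝ (Fin n)), IsCompact K →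
      IntegrableOn (fun ξ : EuclideanSpace ℝ (Fin n) =>
        (-(‖ξ‖ ^ 2 : ℝ) + 2 * Complex.I * ∑ j, ρ j * (ξ j : ℂ))⁻¹) K := by
  obtain ⟨k, rfl⟩ : ∃ k, n = k + 1 := ⟨n - 1, by omega⟩
  have hk : 2 ≤ k := by omega
  intro K hK
  set m : EuclideanSpace ℝ (Fin (k + 1)) → ℂ :=
    fun ξ => (-(‖ξ‖ ^ 2 : ℝ) + 2 * Complex.I * ∑ j, ρ j * (ξ j : ℂ)) with hm
  set a : EuclideanSpace ℝ (Fin (k + 1)) := WithLp.toLp 2 (fun j => (ρ j).re : Fin (k + 1) → ℝ) with ha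
  set b : EuclideanSpace ℝ (Fin (k + 1)) := WithLp.toLp 2 (fun j => (ρ j).im : Fin (k + 1) → ℝ) with hb
  have ha0 : a ≠ 0 := by
    intro h
    apply hRe
    intro j
    have : a j = 0 := by rw [h]; rfl
    rwa [ha] at this
  have hna : (0:ℝ) < ‖a‖ := norm_pos_iff.mpr ha0
  -- continuity and measurability of m
  have hcoord : ∀ j : Fin (k + 1), Continuous fun ξ : EuclideanSpace ℝ (Fin (k + 1)) => ξ j :=
    fun j => (EuclideanSpace.proj j : EuclideanSpace ℝ (Fin (k + 1)) →L[ℝ] ℝ).continuous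
  have hmcont : Continuous m := by
    rw [hm]
    apply Continuous.add
    · have h1 : Continuous fun ξ : EuclideanSpace ℝ (Fin (k + 1)) => ‖ξ‖ ^ 2 :=
        continuous_norm.pow 2
      exact (Complex.continuous_ofReal.comp h1).neg
    · apply Continuous.mul continuous_const
      apply continuous_finset_sum
      intro j _
      exact Continuous.mul continuous_const (Complex.continuous_ofReal.comp (hcoord j))
  have hmmeas : Measurable fun ξ : EuclideanSpace ℝ (Fin (k + 1)) => (m ξ)⁻¹ :=
    hmcont.measurable.inv
  -- inner product identities
  have hinnera : ∀ ξ : EuclideanSpace ℝ (Fin (k + 1)),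
      (inner ℝ a ξ : ℝ) = ∑ j, (ρ j).re * ξ j := by
    intro ξ
    rw [PiLp.inner_apply]
    apply Finset.sum_congr rfl
    intro j _
    simp [ha, RCLike.inner_apply, mul_comm]
  have hinnerb : ∀ ξ : EuclideanSpace ℝ (Fin (k + 1)),
      (inner ℝ ξ b : ℝ) = ∑ j, (ρ j).im * ξ j := by
    intro ξ
    rw [PiLp.inner_apply]
    apply Finset.sum_congr rfl
    intro j _
    simp [hb, RCLike.inner_apply, mul_comm]
  have hz_re : ∀ ξ : EuclideanSpace ℝ (Fin (k + 1)),
      (∑ j, ρ j * (ξ j : ℂ)).re = ∑ j, (ρ j).re * ξ j := by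
    intro ξ
    rw [Complex.re_sum]
    exact Finset.sum_congr rfl fun j _ => by simp [Complex.mul_re]
  have hz_im : ∀ ξ : EuclideanSpace ℝ (Fin (k + 1)),
      (∑ j, ρ j * (ξ j : ℂ)).im = ∑ j, (ρ j).im * ξ j := by
    intro ξ
    rw [Complex.im_sum]
    exact Finset.sum_congr rfl fun j _ => by simp [Complex.mul_im]
  have him : ∀ ξ : EuclideanSpace ℝ (Fin (k + 1)), (m ξ).im = 2 * (inner ℝ a ξ : ℝ) := by
    intro ξ
    rw [hinnera ξ]
    simp only [hm]
    rw [Complex.add_im, Complex.mul_im, hz_re ξ, hz_im ξ]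
    simp [← Complex.ofReal_pow]
  have hre : ∀ ξ : EuclideanSpace ℝ (Fin (k + 1)),
      (m ξ).re = -(‖ξ + b‖ ^ 2 - ‖b‖ ^ 2) := by
    intro ξ
    have hn2 : ‖ξ + b‖ ^ 2 - ‖b‖ ^ 2 = ‖ξ‖ ^ 2 + 2 * ∑ j, (ρ j).im * ξ j := by
      rw [← hinnerb ξ, norm_add_sq_real]
      ring
    rw [hn2]
    simp only [hm]
    rw [Complex.add_re, Complex.mul_re, hz_re ξ, hz_im ξ]
    simp [← Complex.ofReal_pow]
    ring
  -- subset into the slab/annulus set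
  have hsubset : ∀ lam : ℝ, {ξ : EuclideanSpace ℝ (Fin (k + 1)) | ‖m ξ‖ < lam} ⊆
      {ξ : EuclideanSpace ℝ (Fin (k + 1)) |
        |2 * inner ℝ a ξ| < lam ∧ |‖ξ + b‖ ^ 2 - ‖b‖ ^ 2| < lam} := by
    intro lam ξ hξ
    simp only [Set.mem_setOf_eq] at hξ ⊢
    constructor
    · calc |2 * (inner ℝ a ξ : ℝ)| = |(m ξ).im| := by rw [him ξ]
        _ ≤ ‖m ξ‖ := Complex.abs_im_le_norm _
        _ = ‖m ξ‖ := rfl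
        _ < lam := hξ
    · calc |‖ξ + b‖ ^ 2 - ‖b‖ ^ 2| = |(m ξ).re| := by rw [hre ξ, abs_neg]
        _ ≤ ‖m ξ‖ := Complex.abs_re_le_norm _
        _ = ‖m ξ‖ := rfl
        _ < lam := hξ
  set C0 : ℝ := (1 / ‖a‖) * ((k : ℝ) * Real.sqrt (‖b‖ ^ 2 + 1) ^ (k - 2) * ballC k * 2)
    with hC0def
  have hC0 : 0 ≤ C0 := by
    have h1 := ballC_nonneg k
    have h2 : (0:ℝ) ≤ Real.sqrt (‖b‖ ^ 2 + 1) ^ (k - 2) := by positivity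
    have h3 : (0:ℝ) ≤ 1 / ‖a‖ := by positivity
    rw [hC0def]; positivity
  have hmain : ∀ lam : ℝ, 0 < lam → lam ≤ 1 →
      volume {ξ : EuclideanSpace ℝ (Fin (k + 1)) | ‖m ξ‖ < lam} ≤
        ENNReal.ofReal C0 * (ENNReal.ofReal lam * ENNReal.ofReal lam) := by
    intro lam hl hl1
    refine (measure_mono (hsubset lam)).trans ?_
    refine (aux_main_bound hk a b ha0 hl hl1).trans ?_
    have h1 : (0:ℝ) ≤ lam / ‖a‖ := by positivity
    have h2 : (0:ℝ) ≤ C0 * lam := mul_nonneg hC0 hl.le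
    rw [← ENNReal.ofReal_mul hl.le, ← ENNReal.ofReal_mul hC0, ← ENNReal.ofReal_mul h1]
    apply ENNReal.ofReal_le_ofReal
    apply le_of_eq
    rw [div_eq_mul_inv, hC0def, one_div]
    ring
  -- integrability via layer cake
  constructor
  · exact hmmeas.aestronglyMeasurable
  · rw [hasFiniteIntegral_iff_norm]
    rw [lintegral_eq_lintegral_meas_lt _ (Filter.Eventually.of_forall fun ξ => norm_nonneg _)
      hmmeas.norm.aemeasurable]
    have hsplit : Set.Ioi (0:ℝ) = Set.Ioc 0 1 ∪ Set.Ioi 1 :=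
      (Set.Ioc_union_Ioi_eq_Ioi (by norm_num)).symm
    rw [hsplit]
    refine lt_of_le_of_lt (lintegral_union_le _ _ _) ?_
    have hpart1 : ∫⁻ t in Set.Ioc (0:ℝ) 1,
        (volume.restrict K) {ξ : EuclideanSpace ℝ (Fin (k + 1)) | t < ‖(m ξ)⁻¹‖} < ⊤ := by
      have hb1 : ∀ t : ℝ, (volume.restrict K)
          {ξ : EuclideanSpace ℝ (Fin (k + 1)) | t < ‖(m ξ)⁻¹‖} ≤ volume K := by
        intro t
        refine le_trans (measure_mono (Set.subset_univ _)) ?_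
        rw [Measure.restrict_apply_univ]
      calc ∫⁻ t in Set.Ioc (0:ℝ) 1,
            (volume.restrict K) {ξ : EuclideanSpace ℝ (Fin (k + 1)) | t < ‖(m ξ)⁻¹‖}
          ≤ ∫⁻ _ in Set.Ioc (0:ℝ) 1, volume K := lintegral_mono fun t => hb1 t
        _ = volume K * volume (Set.Ioc (0:ℝ) 1) := setLIntegral_const _ _
        _ < ⊤ := by
            apply ENNReal.mul_lt_top hK.measure_lt_top
            rw [Real.volume_Ioc]
            exact ENNReal.ofReal_lt_top
    have hpart2 : ∫⁻ t in Set.Ioi (1:ℝ),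
        (volume.restrict K) {ξ : EuclideanSpace ℝ (Fin (k + 1)) | t < ‖(m ξ)⁻¹‖} < ⊤ := by
      have hbd : ∀ t ∈ Set.Ioi (1:ℝ), (volume.restrict K)
          {ξ : EuclideanSpace ℝ (Fin (k + 1)) | t < ‖(m ξ)⁻¹‖} ≤
          ENNReal.ofReal C0 * ENNReal.ofReal ‖t ^ (-2:ℝ)‖ := by
        intro t ht
        have ht1 : (1:ℝ) < t := ht
        have ht0 : (0:ℝ) < t := lt_trans one_pos ht1
        have hss : {ξ : EuclideanSpace ℝ (Fin (k + 1)) | t < ‖(m ξ)⁻¹‖} ⊆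
            {ξ : EuclideanSpace ℝ (Fin (k + 1)) | ‖m ξ‖ < 1 / t} := by
          intro ξ hξ
          simp only [Set.mem_setOf_eq] at hξ ⊢
          by_cases hz : m ξ = 0
          · rw [hz] ; simp ; positivity
          · rw [norm_inv] at hξ
            have hmpos : 0 < ‖m ξ‖ := norm_pos_iff.mpr hz
            rw [lt_div_iff₀ ht0]
            calc ‖m ξ‖ * t < ‖m ξ‖ * ‖m ξ‖⁻¹ := by
                  exact mul_lt_mul_of_pos_left hξ hmpos
              _ = 1 := mul_inv_cancel₀ hmpos.ne'
        have h1t : 0 < 1 / t := by positivity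
        have h1t1 : 1 / t ≤ 1 := by
          rw [div_le_one ht0]; linarith
        calc (volume.restrict K) {ξ : EuclideanSpace ℝ (Fin (k + 1)) | t < ‖(m ξ)⁻¹‖}
            ≤ volume {ξ : EuclideanSpace ℝ (Fin (k + 1)) | t < ‖(m ξ)⁻¹‖} :=
              Measure.restrict_le_self _
          _ ≤ volume {ξ : EuclideanSpace ℝ (Fin (k + 1)) | ‖m ξ‖ < 1 / t} := measure_mono hss
          _ ≤ ENNReal.ofReal C0 * (ENNReal.ofReal (1/t) * ENNReal.ofReal (1/t)) :=
              hmain (1/t) h1t h1t1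
          _ = ENNReal.ofReal C0 * ENNReal.ofReal ‖t ^ (-2:ℝ)‖ := by
              congr 1
              rw [← ENNReal.ofReal_mul (by positivity)]
              congr 1
              rw [Real.norm_eq_abs, abs_of_nonneg (Real.rpow_nonneg ht0.le _)]
              rw [show (-2:ℝ) = -((2:ℕ):ℝ) by norm_num, Real.rpow_neg ht0.le,
                Real.rpow_natCast]
              field_simp
      calc ∫⁻ t in Set.Ioi (1:ℝ),
            (volume.restrict K) {ξ : EuclideanSpace ℝ (Fin (k + 1)) | t < ‖(m ξ)⁻¹‖}
          ≤ ∫⁻ t in Set.Ioi (1:ℝ), ENNReal.ofReal C0 * ENNReal.ofReal ‖t ^ (-2:ℝ)‖ := by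
            apply lintegral_mono_ae
            filter_upwards [ae_restrict_mem measurableSet_Ioi] with t ht
            exact hbd t ht
        _ = ENNReal.ofReal C0 * ∫⁻ t in Set.Ioi (1:ℝ), ENNReal.ofReal ‖t ^ (-2:ℝ)‖ :=
            lintegral_const_mul' _ _ ENNReal.ofReal_ne_top
        _ < ⊤ := by
            apply ENNReal.mul_lt_top ENNReal.ofReal_lt_top
            have hInt : IntegrableOn (fun t : ℝ => t ^ (-2:ℝ)) (Set.Ioi 1) :=
              integrableOn_Ioi_rpow_of_lt (by norm_num) one_pos
            have := hInt.hasFiniteIntegral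
            rwa [hasFiniteIntegral_iff_norm] at this
    exact ENNReal.add_lt_top.mpr ⟨hpart1, hpart2⟩
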